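/- arXiv:1703.06128 — 2 statements merged into one kernel-verified Lean document; each statement's English description precedes it below -/
import Mathlib

section
/- Let p₁, ..., p_{N-1} be probability densities on (Ω, μ), α₁, ..., α_{N-1} ≥ 0 with ∑ αₙ = 1, and let b = ∫_Ω ∏ₙ pₙ^{αₙ} dμ ∈ (0, ∞). Then for every probability density p_N on (Ω, μ), ∑_{n=1}^{N-1} αₙ D_KL(p_N ‖ pₙ) ≥ -log b. -/
open MeasureTheory

theorem weighted_kl_lower_bound
    {Ω : Type*} [MeasurableSpace Ω] (μ : Measure Ω) (m : ℕ)
    (p : Fin m → Ω → ℝ) (α : Fin m → ℝ)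
    (hα : ∀ n, 0 ≤ α n) (hαsum : ∑ n, α n = 1)
    (hpmeas : ∀ n, Measurable (p n)) (hppos : ∀ n, ∀ ω, 0 < p n ω)
    (hpint : ∀ n, ∫ ω, p n ω ∂μ = 1)
    (hgint : Integrable (fun ω => ∏ n, (p n ω) ^ (α n)) μ)
    (b : ℝ) (hb : b = ∫ ω, ∏ n, (p n ω) ^ (α n) ∂μ) (hbpos : 0 < b)
    (pN : Ω → ℝ) (hNmeas : Measurable pN) (hNnonneg : ∀ ω, 0 ≤ pN ω)
    (hNint : ∫ ω, pN ω ∂μ = 1)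
    (hint : ∀ n, Integrable (fun ω => pN ω * Real.log (pN ω / p n ω)) μ) :
    -Real.log b ≤ ∑ n, α n * ∫ ω, pN ω * Real.log (pN ω / p n ω) ∂μ := by
  set g : Ω → ℝ := fun ω => ∏ n, (p n ω) ^ (α n) with hg
  have hgpos : ∀ ω, 0 < g ω := fun ω =>
    Finset.prod_pos fun n _ => Real.rpow_pos_of_pos (hppos n ω) _
  have hpNint : Integrable pN μ := by
    by_contra h
    rw [integral_undef h] at hNint
    norm_num at hNint
  have hsum_int : Integrable (fun ω => ∑ n, α n * (pN ω * Real.log (pN ω / p n ω))) μ :=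
    integrable_finset_sum _ fun n _ => (hint n).const_mul _
  have hlhs_int : Integrable (fun ω => pN ω - g ω / b - pN ω * Real.log b) μ :=
    (hpNint.sub (hgint.div_const b)).sub (hpNint.mul_const _)
  have key : ∀ ω, pN ω - g ω / b - pN ω * Real.log b
      ≤ ∑ n, α n * (pN ω * Real.log (pN ω / p n ω)) := by
    intro ω
    rcases eq_or_lt_of_le (hNnonneg ω) with h0 | hpos
    · have : ∀ n, α n * (pN ω * Real.log (pN ω / p n ω)) = 0 := by
        intro n; rw [← h0]; ring
      rw [Finset.sum_congr rfl fun n _ => this n, Finset.sum_const, smul_zero, ← h0]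
      have := div_pos (hgpos ω) hbpos
      linarith
    · have hlogg : Real.log (g ω) = ∑ n, α n * Real.log (p n ω) := by
        rw [hg, Real.log_prod (fun n _ => (Real.rpow_pos_of_pos (hppos n ω) _).ne')]
        exact Finset.sum_congr rfl fun n _ => Real.log_rpow (hppos n ω) _
      have hsum : ∑ n, α n * (pN ω * Real.log (pN ω / p n ω))
          = pN ω * (Real.log (pN ω) - Real.log (g ω)) := by
        have hterm : ∀ n ∈ Finset.univ, α n * (pN ω * Real.log (pN ω / p n ω))
            = α n * (pN ω * Real.log (pN ω)) - pN ω * (α n * Real.log (p n ω)) := by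
          intro n _
          rw [Real.log_div hpos.ne' (hppos n ω).ne']; ring
        rw [Finset.sum_congr rfl hterm, Finset.sum_sub_distrib, ← Finset.sum_mul, hαsum,
          ← Finset.mul_sum, ← hlogg]
        ring
      rw [hsum]
      have h1 : Real.log (g ω / (b * pN ω)) ≤ g ω / (b * pN ω) - 1 :=
        Real.log_le_sub_one_of_pos (div_pos (hgpos ω) (mul_pos hbpos hpos))
      have h2 : Real.log (g ω / (b * pN ω))
          = Real.log (g ω) - Real.log b - Real.log (pN ω) := by
        rw [Real.log_div (hgpos ω).ne' (by positivity),
          Real.log_mul hbpos.ne' hpos.ne']; ring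
      rw [h2] at h1
      have h4 := mul_le_mul_of_nonneg_left h1 hpos.le
      have h5 : pN ω * (g ω / (b * pN ω) - 1) = g ω / b - pN ω := by
        field_simp
      rw [h5] at h4
      nlinarith [h4]
  have hineq : ∫ ω, (pN ω - g ω / b - pN ω * Real.log b) ∂μ
      ≤ ∫ ω, ∑ n, α n * (pN ω * Real.log (pN ω / p n ω)) ∂μ :=
    integral_mono hlhs_int hsum_int key
  rw [integral_finset_sum _ (fun n _ => (hint n).const_mul _)] at hineq
  simp only [integral_const_mul] at hineq
  have hL : ∫ ω, (pN ω - g ω / b - pN ω * Real.log b) ∂μ = -Real.log b := by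
    have hA : Integrable (fun ω => pN ω - g ω / b) μ := hpNint.sub (hgint.div_const b)
    have hB : Integrable (fun ω => pN ω * Real.log b) μ := hpNint.mul_const _
    have hC : Integrable (fun ω => g ω / b) μ := hgint.div_const b
    rw [integral_sub hA hB, integral_sub hpNint hC, integral_div, integral_mul_const,
      hNint, ← hb, div_self hbpos.ne']
    ring
  rw [hL] at hineq
  exact hineq
end

section
/- (Discrete optimality gap, single density.) Let g : ℝ → ℝ be convex and differentiable, μ ∈ ℝ^K with μ_k > 0, and let q minimize F(a) = ∑_k g(a_k) μ_k subject to p' ≤ a ≤ p'' and ⟨a, μ⟩ = 1. Then for every feasible a and every c ∈ ℝ: F(a) - F(q) ≤ e'' + e', where e'' = ∑_k (a_k - p''_k) · min{g'(a_k) - c, 0} · μ_k ≥ 0 and e' = ∑_k (a_k - p'_k) · max{g'(a_k) - c, 0} · μ_k ≥ 0. -/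
lemma grad_ineq {g : ℝ → ℝ} (hgconv : ConvexOn ℝ Set.univ g)
    (hgdiff : Differentiable ℝ g) (x y : ℝ) :
    deriv g x * (y - x) ≤ g y - g x := by
  rcases lt_trichotomy x y with h | h | h
  · have := hgconv.deriv_le_slope (Set.mem_univ x) (Set.mem_univ y) h (hgdiff x)
    rw [slope_def_field] at this
    have hxy : 0 < y - x := by linarith
    calc deriv g x * (y - x) ≤ (g y - g x) / (y - x) * (y - x) :=
          mul_le_mul_of_nonneg_right this hxy.le
      _ = g y - g x := by field_simp
  · simp [h]
  · have := hgconv.slope_le_of_hasDerivAt (Set.mem_univ y) (Set.mem_univ x) h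
      (hgdiff x).hasDerivAt
    rw [slope_def_field] at this
    have hxy : 0 < x - y := by linarith
    have h2 : g x - g y ≤ deriv g x * (x - y) := by
      calc g x - g y = (g x - g y) / (x - y) * (x - y) := by field_simp
        _ ≤ deriv g x * (x - y) := mul_le_mul_of_nonneg_right this hxy.le
    nlinarith

theorem discrete_optimality_gap
    (K : ℕ) (μ p' p'' : Fin K → ℝ)
    (hμ : ∀ k, 0 < μ k)
    (g : ℝ → ℝ) (hgconv : ConvexOn ℝ Set.univ g) (hgdiff : Differentiable ℝ g)
    (q : Fin K → ℝ)
    (hqfeas : (∀ k, p' k ≤ q k ∧ q k ≤ p'' k) ∧ ∑ k, q k * μ k = 1)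
    (hqmin : ∀ b : Fin K → ℝ, ((∀ k, p' k ≤ b k ∧ b k ≤ p'' k) ∧ ∑ k, b k * μ k = 1) →
        ∑ k, g (q k) * μ k ≤ ∑ k, g (b k) * μ k)
    (a : Fin K → ℝ)
    (hafeas : (∀ k, p' k ≤ a k ∧ a k ≤ p'' k) ∧ ∑ k, a k * μ k = 1)
    (c : ℝ) :
    (∑ k, g (a k) * μ k) - (∑ k, g (q k) * μ k) ≤
        (∑ k, (a k - p'' k) * min (deriv g (a k) - c) 0 * μ k) +
        (∑ k, (a k - p' k) * max (deriv g (a k) - c) 0 * μ k) ∧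
      0 ≤ ∑ k, (a k - p'' k) * min (deriv g (a k) - c) 0 * μ k ∧
      0 ≤ ∑ k, (a k - p' k) * max (deriv g (a k) - c) 0 * μ k := by
  obtain ⟨haf, hasum⟩ := hafeas
  obtain ⟨hqf, hqsum⟩ := hqfeas
  refine ⟨?_, ?_, ?_⟩
  · have hzero : ∑ k, (a k - q k) * μ k = 0 := by
      have : ∑ k, (a k - q k) * μ k = (∑ k, a k * μ k) - (∑ k, q k * μ k) := by
        rw [← Finset.sum_sub_distrib]
        exact Finset.sum_congr rfl fun k _ => by ring
      rw [this, hasum, hqsum]; ring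
    have key : ∀ k, g (a k) * μ k - g (q k) * μ k ≤
        (a k - p'' k) * min (deriv g (a k) - c) 0 * μ k +
        (a k - p' k) * max (deriv g (a k) - c) 0 * μ k + c * ((a k - q k) * μ k) := by
      intro k
      set d := deriv g (a k) - c with hd
      have h1 := grad_ineq hgconv hgdiff (a k) (q k)
      have hminmax : min d 0 + max d 0 = d := min_add_max d 0 |>.trans (by ring)
      have e1 : min d 0 * (a k - q k) ≤ min d 0 * (a k - p'' k) :=
        mul_le_mul_of_nonpos_left (by linarith [(hqf k).2]) (min_le_right d 0)
      have e2 : max d 0 * (a k - q k) ≤ max d 0 * (a k - p' k) :=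
        mul_le_mul_of_nonneg_left (by linarith [(hqf k).1]) (le_max_right d 0)
      have hdx : d * (a k - q k) = min d 0 * (a k - q k) + max d 0 * (a k - q k) := by
        linear_combination (a k - q k) * hminmax.symm
      have h1' : deriv g (a k) * (q k - a k) =
          -(d * (a k - q k)) - c * (a k - q k) := by rw [hd]; ring
      have core : g (a k) - g (q k) ≤
          (a k - p'' k) * min d 0 + (a k - p' k) * max d 0 + c * (a k - q k) := by
        rw [h1'] at h1
        nlinarith [e1, e2, hdx, h1]
      have := mul_le_mul_of_nonneg_right core (hμ k).le
      nlinarith [this]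
    calc (∑ k, g (a k) * μ k) - (∑ k, g (q k) * μ k)
        = ∑ k, (g (a k) * μ k - g (q k) * μ k) := by rw [Finset.sum_sub_distrib]
      _ ≤ ∑ k, ((a k - p'' k) * min (deriv g (a k) - c) 0 * μ k +
            (a k - p' k) * max (deriv g (a k) - c) 0 * μ k +
            c * ((a k - q k) * μ k)) :=
          Finset.sum_le_sum fun k _ => key k
      _ = (∑ k, (a k - p'' k) * min (deriv g (a k) - c) 0 * μ k) +
          (∑ k, (a k - p' k) * max (deriv g (a k) - c) 0 * μ k) +
          c * ∑ k, (a k - q k) * μ k := by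
            rw [Finset.mul_sum, ← Finset.sum_add_distrib, ← Finset.sum_add_distrib]
      _ = _ := by rw [hzero]; ring
  · refine Finset.sum_nonneg fun k _ => ?_
    have h0 : 0 ≤ (p'' k - a k) * (0 - min (deriv g (a k) - c) 0) :=
      mul_nonneg (by linarith [(haf k).2]) (by simp [min_le_right])
    have : 0 ≤ (a k - p'' k) * min (deriv g (a k) - c) 0 := by nlinarith [h0]
    exact mul_nonneg this (hμ k).le
  · refine Finset.sum_nonneg fun k _ => ?_
    have : 0 ≤ (a k - p' k) * max (deriv g (a k) - c) 0 :=
      mul_nonneg (by linarith [(haf k).1]) (le_max_right _ 0)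
    exact mul_nonneg this (hμ k).le
end
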